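/- Let g : ℝ → ℝ be defined by g(x) = x for x ≥ 0 and g(x) = 2x for x ≤ 0, and let F(x,y) = e^x − e^y − e^y(x−y). Then F(g(x), g(y)) ≤ 4 F(x, y) for all x, y ∈ ℝ. -/

import Mathlib

/-- Bregman divergence of the exponential function. -/
noncomputable def bregF (x y : ℝ) : ℝ := Real.exp x - Real.exp y - Real.exp y * (x - y)

/-- The piecewise linear cut-off function: g(x) = x for x ≥ 0, g(x) = 2x for x ≤ 0. -/
noncomputable def cutg (x : ℝ) : ℝ := if 0 ≤ x then x else 2 * x

open Real

private lemma hasDeriv_h (s : ℝ) :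
    HasDerivAt (fun t : ℝ => exp (2*t) - 4 * exp t + 3 + 2*t)
      (2 * exp (2*s) - 4 * exp s + 2) s := by
  have h2t : HasDerivAt (fun t : ℝ => 2*t) 2 s := by
    simpa using (hasDerivAt_id s).const_mul (2:ℝ)
  have h1 : HasDerivAt (fun t : ℝ => exp (2*t)) (exp (2*s) * 2) s := h2t.exp
  have h2 : HasDerivAt (fun t : ℝ => 4 * exp t) (4 * exp s) s :=
    (Real.hasDerivAt_exp s).const_mul 4
  have := ((h1.sub h2).add_const 3).add h2t
  exact this.congr_deriv (by ring)

private lemma lem_h {t : ℝ} (ht : t ≤ 0) : exp (2*t) - 4 * exp t + 3 + 2*t ≤ 0 := by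
  have mono : Monotone (fun t : ℝ => exp (2*t) - 4 * exp t + 3 + 2*t) := by
    apply monotone_of_deriv_nonneg
    · exact fun s => (hasDeriv_h s).differentiableAt
    · intro s
      rw [(hasDeriv_h s).deriv]
      have h : exp (2*s) = exp s ^ 2 := by
        rw [two_mul, Real.exp_add]; ring
      rw [h]
      nlinarith [sq_nonneg (exp s - 1)]
  have h0 := mono ht
  simp only [mul_zero, Real.exp_zero] at h0
  linarith

private lemma hasDeriv_psi (s : ℝ) :
    HasDerivAt (fun t : ℝ => 4 * exp (-t) + 4*t*exp (-t) - exp (-(2*t)) - 2*t*exp (-(2*t)) - 3)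
      (4 * s * (exp (-(2*s)) - exp (-s))) s := by
  have hneg : HasDerivAt (fun t : ℝ => -t) (-1) s := by
    exact (hasDerivAt_id' s).neg
  have hneg2 : HasDerivAt (fun t : ℝ => -(2*t)) (-2) s := by
    have := ((hasDerivAt_id s).const_mul (2:ℝ)).neg
    exact this.congr_deriv (by ring)
  have he1 : HasDerivAt (fun t : ℝ => exp (-t)) (exp (-s) * (-1)) s := hneg.exp
  have he2 : HasDerivAt (fun t : ℝ => exp (-(2*t))) (exp (-(2*s)) * (-2)) s := hneg2.exp
  have ht : HasDerivAt (fun t : ℝ => 4*t) 4 s := by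
    simpa using (hasDerivAt_id s).const_mul (4:ℝ)
  have ht2 : HasDerivAt (fun t : ℝ => 2*t) 2 s := by
    simpa using (hasDerivAt_id s).const_mul (2:ℝ)
  have p1 : HasDerivAt (fun t : ℝ => 4 * exp (-t)) (4 * (exp (-s) * (-1))) s := he1.const_mul 4
  have p2 : HasDerivAt (fun t : ℝ => 4*t*exp (-t)) (4 * exp (-s) + 4*s*(exp (-s) * (-1))) s :=
    ht.mul he1
  have p3 : HasDerivAt (fun t : ℝ => 2*t*exp (-(2*t)))
      (2 * exp (-(2*s)) + 2*s*(exp (-(2*s)) * (-2))) s := ht2.mul he2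
  have := ((((p1.add p2).sub he2).sub p3).sub_const 3)
  exact this.congr_deriv (by ring)

private lemma lem_psi {t : ℝ} (ht : 0 ≤ t) :
    4 * exp (-t) + 4*t*exp (-t) - exp (-(2*t)) - 2*t*exp (-(2*t)) - 3 ≤ 0 := by
  have anti : Antitone (fun t : ℝ => 4 * exp (-t) + 4*t*exp (-t) - exp (-(2*t)) - 2*t*exp (-(2*t)) - 3) := by
    apply antitone_of_deriv_nonpos
    · exact fun s => (hasDeriv_psi s).differentiableAt
    · intro s
      rw [(hasDeriv_psi s).deriv]
      have h : exp (-(2*s)) = exp (-s) ^ 2 := by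
        rw [show -(2*s) = (-s) + (-s) by ring, Real.exp_add]; ring
      rw [h]
      rcases le_or_gt 0 s with hs | hs
      · have h1 : exp (-s) ≤ 1 := exp_le_one_iff.2 (by linarith)
        nlinarith [mul_nonneg hs (mul_nonneg (exp_pos (-s)).le (sub_nonneg.2 h1))]
      · have h1 : 1 ≤ exp (-s) := one_le_exp_iff.2 (by linarith)
        nlinarith [mul_nonpos_of_nonpos_of_nonneg hs.le
          (mul_nonneg (exp_pos (-s)).le (sub_nonneg.2 h1))]
  have := anti ht
  simp only [mul_zero, neg_zero, zero_mul, exp_zero] at this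
  linarith

set_option maxHeartbeats 1000000 in
theorem stmt_3 (x y : ℝ) : bregF (cutg x) (cutg y) ≤ 4 * bregF x y := by
  obtain ⟨t, rfl⟩ : ∃ t, x = y + t := ⟨x - y, by ring⟩
  unfold bregF cutg
  have hb : (0:ℝ) < exp y := exp_pos y
  have hE : (0:ℝ) < exp t := exp_pos t
  have hxy : exp (y + t) = exp y * exp t := Real.exp_add y t
  have hB : 0 ≤ exp t - 1 - t := by nlinarith [Real.add_one_le_exp t]
  split_ifs with hx hy hy
  · -- 0 ≤ y + t, 0 ≤ y : goal F ≤ 4F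
    rw [hxy]
    nlinarith [mul_nonneg hb.le hB]
  · -- 0 ≤ y + t, y < 0 : case C
    push_neg at hy
    have hb1 : exp y ≤ 1 := exp_le_one_iff.2 hy.le
    have hex : (y + t) + 1 ≤ exp (y + t) := Real.add_one_le_exp _
    have h2y : exp (2*y) = exp y ^ 2 := by rw [two_mul, Real.exp_add]; ring
    have hpsi := lem_psi (t := -y) (by linarith)
    rw [show -(-y) = y by ring, show -(2 * -y) = 2*y by ring] at hpsi
    rw [h2y] at hpsi
    rw [h2y]
    nlinarith [mul_nonneg hx (mul_nonneg (sub_nonneg.2 hb1) (by linarith : (0:ℝ) ≤ 3 - exp y)),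
      hpsi, hx]
  · -- y + t < 0, 0 ≤ y : case D
    push_neg at hx
    have ht0 : t ≤ 0 := by linarith
    have hL := lem_h ht0
    have h2x : exp (2*(y+t)) = (exp y * exp t)^2 := by
      rw [show 2*(y+t) = (y+t) + (y+t) by ring, Real.exp_add, hxy]; ring
    have h2t : exp (2*t) = exp t ^ 2 := by rw [two_mul, Real.exp_add]; ring
    rw [h2t] at hL
    have hu : (0:ℝ) < exp (-y) := exp_pos _
    have hu1 : exp (-y) ≤ 1 := exp_le_one_iff.2 (by linarith)
    have huy : 1 - y ≤ exp (-y) := by nlinarith [Real.add_one_le_exp (-y)]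
    have hub : exp (-y) * exp y = 1 := by rw [← Real.exp_add]; simp
    have hE2 : exp t ^ 2 ≤ exp (-y) ^ 2 := by
      have : exp (2*t) ≤ exp (-(2*y)) := exp_le_exp.2 (by linarith)
      rw [h2t, show -(2*y) = (-y) + (-y) by ring, Real.exp_add] at this
      nlinarith [this]
    have hb1 : 1 ≤ exp y := one_le_exp_iff.2 hy
    have hu2b : exp (-y) ^ 2 * exp y = exp (-y) := by
      nlinarith [hub]
    have P1 : 0 ≤ (exp (-y) ^ 2 - exp t ^ 2) * (exp y - 1) :=
      mul_nonneg (by linarith) (by linarith)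
    have hbr2 : 0 ≤ y - exp t ^ 2 * (exp y - 1) := by
      nlinarith [P1, sq_nonneg (1 - exp (-y))]
    have P2 : 0 ≤ exp y * (4 * exp t - exp t ^ 2 - 3 - 2*t) :=
      mul_nonneg hb.le (by linarith)
    have P3 : 0 ≤ exp y * (y - exp t ^ 2 * (exp y - 1)) := mul_nonneg hb.le hbr2
    rw [hxy, h2x]
    nlinarith [P2, P3]
  · -- y + t < 0, y < 0 : case B
    push_neg at hx hy
    have h2x : exp (2*(y+t)) = (exp y * exp t)^2 := by
      rw [show 2*(y+t) = (y+t) + (y+t) by ring, Real.exp_add, hxy]; ring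
    have h2y : exp (2*y) = exp y ^ 2 := by rw [two_mul, Real.exp_add]; ring
    have h2t : exp (2*t) = exp t ^ 2 := by rw [two_mul, Real.exp_add]; ring
    have hA : 0 ≤ exp t ^ 2 - 1 - 2*t := by
      have := Real.add_one_le_exp (2*t)
      rw [h2t] at this; linarith
    rw [hxy, h2x, h2y]
    rcases le_or_gt t 0 with ht0 | ht0
    · -- t ≤ 0 : use b ≤ 1 and lem_h
      have hb1 : exp y ≤ 1 := exp_le_one_iff.2 hy.le
      have hL := lem_h ht0
      rw [h2t] at hL
      nlinarith [mul_nonneg (mul_nonneg hb.le (sub_nonneg.2 hb1)) hA,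
        mul_nonneg hb.le (by linarith : (0:ℝ) ≤ 4*(exp t - 1 - t) - (exp t ^ 2 - 1 - 2*t))]
    · -- t > 0 : use b ≤ exp (-t) and lem_psi
      have hc : (0:ℝ) < exp (-t) := exp_pos _
      have hcE : exp (-t) * exp t = 1 := by rw [← Real.exp_add]; simp
      have hbc : exp y ≤ exp (-t) := by
        have h1 : exp (y + t) ≤ 1 := exp_le_one_iff.2 hx.le
        rw [hxy] at h1
        nlinarith [hcE]
      have hpsi := lem_psi ht0.le
      have h2t' : exp (-(2*t)) = exp (-t) ^ 2 := by
        rw [show -(2*t) = (-t) + (-t) by ring, Real.exp_add]; ring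
      rw [h2t'] at hpsi
      -- psi(t) = c^2*A - 4*c*B where c = exp(-t)
      have hpsi' : exp (-t) ^ 2 * (exp t ^ 2 - 1 - 2*t)
          - 4 * exp (-t) * (exp t - 1 - t) ≤ 0 := by
        nlinarith [hpsi, hcE, sq_nonneg (exp (-t) * exp t - 1)]
      have h4 : exp (-t) * (exp t ^ 2 - 1 - 2*t) ≤ 4 * (exp t - 1 - t) := by
        nlinarith [hpsi', hc]
      have h5 : exp y * (exp t ^ 2 - 1 - 2*t) ≤ exp (-t) * (exp t ^ 2 - 1 - 2*t) :=
        mul_le_mul_of_nonneg_right hbc hA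
      have h45 := h5.trans h4
      have h6 : exp y * (exp y * (exp t ^ 2 - 1 - 2*t)) ≤ exp y * (4 * (exp t - 1 - t)) :=
        mul_le_mul_of_nonneg_left h45 hb.le
      ring_nf at h6 ⊢
      linarith [h6]
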